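/- For all 0 ≤ t < T, p ≤ P̄, and 0 < m₁ ≤ m₂ one has ū_BS(t, m₁, p) ≤ ū_BS(t, m₂, p). In other words, the Black–Scholes barrier-induced trading rate is nondecreasing in the uncapped asset price m. -/

import Mathlib

open MeasureTheory intervalIntegral

noncomputable section

/-- `G(t) = β cosh(β t) + λ⁻¹ Γ sinh(β t)` with `β = √(γ/λ)`. -/
def Gfun (lam gam Gam : ℝ) (t : ℝ) : ℝ :=
  Real.sqrt (gam / lam) * Real.cosh (Real.sqrt (gam / lam) * t)
    + lam⁻¹ * Gam * Real.sinh (Real.sqrt (gam / lam) * t)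

/-- The standard normal density `φ(x) = exp(−x²/2)/√(2π)`. -/
def stdNormalPdf (x : ℝ) : ℝ := Real.exp (-x ^ 2 / 2) / Real.sqrt (2 * Real.pi)

/-- The standard normal cumulative distribution function `Φ(x) = ∫_{−∞}^x φ(y) dy`. -/
def stdNormalCdf (x : ℝ) : ℝ := ∫ y in Set.Iic x, stdNormalPdf y

/-- `f(u, m, p) = σ√u/2 − (1/(σ√u)) log((P̄−p)/m + 1)`. -/
def fBS (σ Pbar : ℝ) (u m p : ℝ) : ℝ :=
  σ * Real.sqrt u / 2 - (1 / (σ * Real.sqrt u)) * Real.log ((Pbar - p) / m + 1)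

/-- The Black–Scholes barrier-induced trading rate
`ū_BS(t,m,p) = (m/(2λ)) ∫_t^T (G(T−s)/G(T−t)) [(σ/√(s−t)) φ(f(s−t,m,p)) + (σ²/2) Φ(f(s−t,m,p))] ds`. -/
def uBS (T lam gam Gam σ Pbar : ℝ) (t m p : ℝ) : ℝ :=
  (m / (2 * lam)) * ∫ s in t..T,
    (Gfun lam gam Gam (T - s) / Gfun lam gam Gam (T - t))
      * ((σ / Real.sqrt (s - t)) * stdNormalPdf (fBS σ Pbar (s - t) m p)
          + (σ ^ 2 / 2) * stdNormalCdf (fBS σ Pbar (s - t) m p))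

/-! ### Auxiliary lemmas -/

lemma stdNormalPdf_nonneg (x : ℝ) : 0 ≤ stdNormalPdf x := by
  unfold stdNormalPdf; positivity

lemma stdNormalPdf_le (x : ℝ) : stdNormalPdf x ≤ (Real.sqrt (2 * Real.pi))⁻¹ := by
  unfold stdNormalPdf
  rw [div_eq_mul_inv]
  have h1 : Real.exp (-x ^ 2 / 2) ≤ 1 := by
    rw [Real.exp_le_one_iff]; nlinarith [sq_nonneg x]
  have h2 : (0:ℝ) ≤ (Real.sqrt (2 * Real.pi))⁻¹ := by positivity
  nlinarith

lemma integrable_stdNormalPdf : Integrable stdNormalPdf := by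
  have h : Integrable (fun x : ℝ => Real.exp (-(1/2) * x ^ 2)) :=
    integrable_exp_neg_mul_sq (by norm_num)
  have h2 : Integrable (fun x : ℝ => Real.exp (-(1/2) * x ^ 2) / Real.sqrt (2 * Real.pi)) :=
    h.div_const _
  have he : (fun x : ℝ => Real.exp (-(1/2) * x ^ 2) / Real.sqrt (2 * Real.pi)) = stdNormalPdf := by
    funext x
    unfold stdNormalPdf
    rw [neg_div, neg_mul]
    ring_nf
  rwa [he] at h2

lemma continuous_stdNormalPdf : Continuous stdNormalPdf := by
  unfold stdNormalPdf
  fun_prop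

lemma stdNormalCdf_nonneg (x : ℝ) : 0 ≤ stdNormalCdf x :=
  setIntegral_nonneg measurableSet_Iic fun y _ => stdNormalPdf_nonneg y

lemma stdNormalCdf_mono : Monotone stdNormalCdf := by
  intro x y h
  exact setIntegral_mono_set integrable_stdNormalPdf.integrableOn
    (Filter.Eventually.of_forall fun z => stdNormalPdf_nonneg z)
    (HasSubset.Subset.eventuallyLE (Set.Iic_subset_Iic.2 h))

lemma stdNormalCdf_le (x : ℝ) : stdNormalCdf x ≤ ∫ y, stdNormalPdf y :=
  setIntegral_le_integral integrable_stdNormalPdf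
    (Filter.Eventually.of_forall fun z => stdNormalPdf_nonneg z)

lemma measurable_stdNormalCdf : Measurable stdNormalCdf := stdNormalCdf_mono.measurable

lemma Gfun_pos {lam gam Gam : ℝ} (hlam : 0 < lam) (hgam : 0 < gam) (hGam : 0 < Gam)
    {u : ℝ} (hu : 0 ≤ u) : 0 < Gfun lam gam Gam u := by
  unfold Gfun
  have hβ : 0 < Real.sqrt (gam / lam) := Real.sqrt_pos.2 (div_pos hgam hlam)
  have h1 : 0 < Real.sqrt (gam / lam) * Real.cosh (Real.sqrt (gam / lam) * u) :=
    mul_pos hβ (Real.cosh_pos _)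
  have h2 : 0 ≤ lam⁻¹ * Gam * Real.sinh (Real.sqrt (gam / lam) * u) :=
    mul_nonneg (by positivity) (by
      rw [← Real.sinh_zero]
      exact Real.sinh_le_sinh.2 (by positivity))
  linarith

lemma Gfun_mono {lam gam Gam : ℝ} (hlam : 0 < lam) (hgam : 0 < gam) (hGam : 0 < Gam)
    {u v : ℝ} (hu : 0 ≤ u) (huv : u ≤ v) :
    Gfun lam gam Gam u ≤ Gfun lam gam Gam v := by
  unfold Gfun
  have hβ : 0 ≤ Real.sqrt (gam / lam) := Real.sqrt_nonneg _
  have hm : Real.sqrt (gam / lam) * u ≤ Real.sqrt (gam / lam) * v :=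
    mul_le_mul_of_nonneg_left huv hβ
  have h1 : Real.cosh (Real.sqrt (gam / lam) * u) ≤ Real.cosh (Real.sqrt (gam / lam) * v) := by
    have hun : 0 ≤ Real.sqrt (gam / lam) * u := mul_nonneg hβ hu
    rw [Real.cosh_le_cosh]
    rw [abs_of_nonneg hun, abs_of_nonneg (hun.trans hm)]
    exact hm
  have h2 : Real.sinh (Real.sqrt (gam / lam) * u) ≤ Real.sinh (Real.sqrt (gam / lam) * v) :=
    Real.sinh_le_sinh.2 hm
  have := mul_le_mul_of_nonneg_left h1 hβ
  have := mul_le_mul_of_nonneg_left h2 (show (0:ℝ) ≤ lam⁻¹ * Gam by positivity)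
  linarith

lemma key_ineq {a K m₁ m₂ : ℝ} (ha : 0 < a) (hK : 0 ≤ K) (hm : 0 < m₁) (h12 : m₁ ≤ m₂) :
    m₁ * Real.exp (-(a/2 - Real.log (K/m₁+1)/a)^2/2)
      ≤ m₂ * Real.exp (-(a/2 - Real.log (K/m₂+1)/a)^2/2) := by
  have hm₂ : 0 < m₂ := lt_of_lt_of_le hm h12
  set x₁ := Real.log (K/m₁+1) with hx₁def
  set x₂ := Real.log (K/m₂+1) with hx₂def
  have hL₁ : (0:ℝ) < K/m₁+1 := by positivity
  have hL₂ : (0:ℝ) < K/m₂+1 := by positivity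
  have hx₂0 : 0 ≤ x₂ := Real.log_nonneg (by
    have : (0:ℝ) ≤ K/m₂ := by positivity
    linarith)
  have hx21 : x₂ ≤ x₁ := by
    apply Real.log_le_log hL₂
    gcongr
  have hid : ∀ m x : ℝ, m * Real.exp (-(a/2 - x/a)^2/2)
      = Real.exp (-(a^2)/8) * (m * Real.exp (x/2)) * Real.exp (-(x^2)/(2*a^2)) := by
    intro m x
    rw [mul_comm (Real.exp _) (m * Real.exp (x/2)), mul_assoc, mul_assoc, ← Real.exp_add,
      ← Real.exp_add]
    congr 1
    have hane : a ≠ 0 := ne_of_gt ha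
    field_simp
    ring
  rw [hid, hid]
  have hA : m₁ * Real.exp (x₁/2) ≤ m₂ * Real.exp (x₂/2) := by
    have hsq : (m₁ * Real.exp (x₁/2))^2 ≤ (m₂ * Real.exp (x₂/2))^2 := by
      have he : ∀ x : ℝ, (Real.exp (x/2))^2 = Real.exp x := by
        intro x
        rw [sq, ← Real.exp_add]
        ring_nf
      rw [mul_pow, mul_pow, he, he, hx₁def, hx₂def, Real.exp_log hL₁, Real.exp_log hL₂]
      have e1 : m₁^2 * (K/m₁+1) = m₁*K + m₁^2 := by field_simp
      have e2 : m₂^2 * (K/m₂+1) = m₂*K + m₂^2 := by field_simp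
      rw [e1, e2]
      nlinarith
    have h1 : (0:ℝ) ≤ m₁ * Real.exp (x₁/2) := by positivity
    have h2 : (0:ℝ) ≤ m₂ * Real.exp (x₂/2) := by positivity
    have := Real.sqrt_le_sqrt hsq
    rwa [Real.sqrt_sq h1, Real.sqrt_sq h2] at this
  have hB : Real.exp (-(x₁^2)/(2*a^2)) ≤ Real.exp (-(x₂^2)/(2*a^2)) := by
    apply Real.exp_le_exp.2
    have : x₂^2 ≤ x₁^2 := by nlinarith
    have ha2 : (0:ℝ) < 2*a^2 := by positivity
    exact (div_le_div_iff_of_pos_right ha2).2 (by linarith)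
  calc Real.exp (-a^2/8) * (m₁ * Real.exp (x₁/2)) * Real.exp (-x₁^2/(2*a^2))
      ≤ Real.exp (-a^2/8) * (m₂ * Real.exp (x₂/2)) * Real.exp (-x₁^2/(2*a^2)) := by
        apply mul_le_mul_of_nonneg_right _ (Real.exp_nonneg _)
        exact mul_le_mul_of_nonneg_left hA (Real.exp_nonneg _)
    _ ≤ Real.exp (-a^2/8) * (m₂ * Real.exp (x₂/2)) * Real.exp (-x₂^2/(2*a^2)) := by
        apply mul_le_mul_of_nonneg_left hB
        positivity

lemma fBS_mono_m {σ Pbar : ℝ} (hσ : 0 < σ) {u m₁ m₂ p : ℝ} (hu : 0 ≤ u)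
    (hp : p ≤ Pbar) (hm : 0 < m₁) (h12 : m₁ ≤ m₂) :
    fBS σ Pbar u m₁ p ≤ fBS σ Pbar u m₂ p := by
  unfold fBS
  have hm₂ : 0 < m₂ := lt_of_lt_of_le hm h12
  have hK : 0 ≤ Pbar - p := by linarith
  have hc : 0 ≤ 1 / (σ * Real.sqrt u) := by positivity
  have hL₂ : (0:ℝ) < (Pbar - p)/m₂ + 1 := by positivity
  have hlog : Real.log ((Pbar - p)/m₂ + 1) ≤ Real.log ((Pbar - p)/m₁ + 1) := by
    apply Real.log_le_log hL₂
    gcongr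
  have := mul_le_mul_of_nonneg_left hlog hc
  linarith

/-- Measurability of the integrand. -/
lemma measurable_integrand (T lam gam Gam σ Pbar t m p : ℝ) :
    Measurable (fun s =>
      (Gfun lam gam Gam (T - s) / Gfun lam gam Gam (T - t))
        * ((σ / Real.sqrt (s - t)) * stdNormalPdf (fBS σ Pbar (s - t) m p)
            + (σ ^ 2 / 2) * stdNormalCdf (fBS σ Pbar (s - t) m p))) := by
  have hf : Measurable (fun s => fBS σ Pbar (s - t) m p) := by
    unfold fBS
    apply Measurable.sub
    · fun_prop
    · apply Measurable.mul _ measurable_const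
      apply Measurable.div measurable_const
      fun_prop
  have hG : Measurable (fun s => Gfun lam gam Gam (T - s) / Gfun lam gam Gam (T - t)) := by
    unfold Gfun
    fun_prop
  have h1 : Measurable (fun s => σ / Real.sqrt (s - t)) := by
    apply Measurable.div measurable_const
    fun_prop
  exact hG.mul ((h1.mul (continuous_stdNormalPdf.measurable.comp hf)).add
    (measurable_const.mul (measurable_stdNormalCdf.comp hf)))

/-- Interval integrability of the integrand. -/
lemma integrable_integrand {T lam gam Gam σ Pbar : ℝ} (hlam : 0 < lam) (hgam : 0 < gam)
    (hGam : 0 < Gam) (hσ : 0 < σ) {t m p : ℝ} (htT : t ≤ T) :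
    IntervalIntegrable (fun s =>
      (Gfun lam gam Gam (T - s) / Gfun lam gam Gam (T - t))
        * ((σ / Real.sqrt (s - t)) * stdNormalPdf (fBS σ Pbar (s - t) m p)
            + (σ ^ 2 / 2) * stdNormalCdf (fBS σ Pbar (s - t) m p))) volume t T := by
  set C₀ := ∫ y, stdNormalPdf y with hC₀
  have hC₀0 : 0 ≤ C₀ := integral_nonneg stdNormalPdf_nonneg
  -- the dominating function
  set g : ℝ → ℝ := fun s => σ * (Real.sqrt (2 * Real.pi))⁻¹ * (s - t) ^ (-(1/2) : ℝ)
      + σ ^ 2 / 2 * C₀ with hg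
  have hgint : IntervalIntegrable g volume t T := by
    apply IntervalIntegrable.add _ (intervalIntegrable_const)
    have h0 : IntervalIntegrable (fun x : ℝ => x ^ (-(1/2) : ℝ)) volume 0 (T - t) :=
      intervalIntegrable_rpow' (by norm_num)
    have h1 := (h0.comp_sub_right t)
    simp only [zero_add, sub_add_cancel] at h1
    exact h1.const_mul _
  rw [intervalIntegrable_iff_integrableOn_Ioc_of_le htT]
  rw [intervalIntegrable_iff_integrableOn_Ioc_of_le htT] at hgint
  apply Integrable.mono hgint
    ((measurable_integrand T lam gam Gam σ Pbar t m p).aestronglyMeasurable)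
  rw [ae_restrict_iff' measurableSet_Ioc]
  apply Filter.Eventually.of_forall
  intro s hs
  have hst : t < s := hs.1
  have hsT : s ≤ T := hs.2
  have hu : 0 < s - t := by linarith
  -- ratio bounds
  have hGt : 0 < Gfun lam gam Gam (T - t) := Gfun_pos hlam hgam hGam (by linarith)
  have hGs : 0 < Gfun lam gam Gam (T - s) := Gfun_pos hlam hgam hGam (by linarith)
  have hratio0 : 0 ≤ Gfun lam gam Gam (T - s) / Gfun lam gam Gam (T - t) :=
    le_of_lt (div_pos hGs hGt)
  have hratio1 : Gfun lam gam Gam (T - s) / Gfun lam gam Gam (T - t) ≤ 1 := by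
    rw [div_le_one hGt]
    exact Gfun_mono hlam hgam hGam (by linarith) (by linarith)
  have hinner0 : 0 ≤ (σ / Real.sqrt (s - t)) * stdNormalPdf (fBS σ Pbar (s - t) m p)
      + (σ ^ 2 / 2) * stdNormalCdf (fBS σ Pbar (s - t) m p) := by
    have := stdNormalPdf_nonneg (fBS σ Pbar (s - t) m p)
    have := stdNormalCdf_nonneg (fBS σ Pbar (s - t) m p)
    have h2 : 0 ≤ σ / Real.sqrt (s - t) := by positivity
    positivity
  have hF0 : 0 ≤ (Gfun lam gam Gam (T - s) / Gfun lam gam Gam (T - t))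
      * ((σ / Real.sqrt (s - t)) * stdNormalPdf (fBS σ Pbar (s - t) m p)
          + (σ ^ 2 / 2) * stdNormalCdf (fBS σ Pbar (s - t) m p)) :=
    mul_nonneg hratio0 hinner0
  have hsqrtpos : 0 < Real.sqrt (s - t) := Real.sqrt_pos.2 hu
  have hrp : (Real.sqrt (s - t))⁻¹ = (s - t) ^ (-(1/2) : ℝ) := by
    rw [Real.sqrt_eq_rpow, ← Real.rpow_neg (le_of_lt hu)]
  have hFg : (Gfun lam gam Gam (T - s) / Gfun lam gam Gam (T - t))
      * ((σ / Real.sqrt (s - t)) * stdNormalPdf (fBS σ Pbar (s - t) m p)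
          + (σ ^ 2 / 2) * stdNormalCdf (fBS σ Pbar (s - t) m p)) ≤ g s := by
    have step1 : (Gfun lam gam Gam (T - s) / Gfun lam gam Gam (T - t))
        * ((σ / Real.sqrt (s - t)) * stdNormalPdf (fBS σ Pbar (s - t) m p)
            + (σ ^ 2 / 2) * stdNormalCdf (fBS σ Pbar (s - t) m p))
        ≤ (σ / Real.sqrt (s - t)) * stdNormalPdf (fBS σ Pbar (s - t) m p)
            + (σ ^ 2 / 2) * stdNormalCdf (fBS σ Pbar (s - t) m p) := by
      nlinarith
    apply step1.trans
    rw [hg]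
    apply add_le_add
    · have h1 : stdNormalPdf (fBS σ Pbar (s - t) m p) ≤ (Real.sqrt (2 * Real.pi))⁻¹ :=
        stdNormalPdf_le _
      have h2 : 0 ≤ σ / Real.sqrt (s - t) := by positivity
      have := mul_le_mul_of_nonneg_left h1 h2
      apply this.trans_eq
      rw [div_eq_mul_inv, hrp]
      ring
    · have h1 : stdNormalCdf (fBS σ Pbar (s - t) m p) ≤ C₀ := stdNormalCdf_le _
      exact mul_le_mul_of_nonneg_left h1 (by positivity)
  have hg0 : 0 ≤ g s := hF0.trans hFg
  rw [Real.norm_eq_abs, Real.norm_eq_abs, abs_of_nonneg hF0, abs_of_nonneg hg0]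
  exact hFg

/-- for `0 ≤ t < T`, `p ≤ P̄` and `0 < m₁ ≤ m₂`,
`ū_BS(t, m₁, p) ≤ ū_BS(t, m₂, p)`: the Black–Scholes barrier-induced rate is
nondecreasing in the uncapped asset price `m`. -/
theorem uBS_monotone_in_uncapped_price
    (T lam gam Gam σ Pbar : ℝ) (hlam : 0 < lam) (hgam : 0 < gam) (hGam : 0 < Gam)
    (hσ : 0 < σ) :
    ∀ t, 0 ≤ t → t < T → ∀ p, p ≤ Pbar → ∀ m₁ m₂, 0 < m₁ → m₁ ≤ m₂ →
      uBS T lam gam Gam σ Pbar t m₁ p ≤ uBS T lam gam Gam σ Pbar t m₂ p := by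
  intro t ht htT p hp m₁ m₂ hm₁ h12
  have hm₂ : 0 < m₂ := lt_of_lt_of_le hm₁ h12
  have htT' : t ≤ T := le_of_lt htT
  have hK : 0 ≤ Pbar - p := by linarith
  -- pointwise inequality
  have hpt : ∀ s ∈ Set.Icc t T,
      m₁ * ((Gfun lam gam Gam (T - s) / Gfun lam gam Gam (T - t))
        * ((σ / Real.sqrt (s - t)) * stdNormalPdf (fBS σ Pbar (s - t) m₁ p)
            + (σ ^ 2 / 2) * stdNormalCdf (fBS σ Pbar (s - t) m₁ p)))
      ≤ m₂ * ((Gfun lam gam Gam (T - s) / Gfun lam gam Gam (T - t))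
        * ((σ / Real.sqrt (s - t)) * stdNormalPdf (fBS σ Pbar (s - t) m₂ p)
            + (σ ^ 2 / 2) * stdNormalCdf (fBS σ Pbar (s - t) m₂ p))) := by
    intro s hs
    have hu : 0 ≤ s - t := by linarith [hs.1]
    have hGt : 0 < Gfun lam gam Gam (T - t) := Gfun_pos hlam hgam hGam (by linarith)
    have hGs : 0 < Gfun lam gam Gam (T - s) := Gfun_pos hlam hgam hGam (by linarith [hs.2])
    have hratio0 : 0 ≤ Gfun lam gam Gam (T - s) / Gfun lam gam Gam (T - t) :=
      le_of_lt (div_pos hGs hGt)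
    have hf12 : fBS σ Pbar (s - t) m₁ p ≤ fBS σ Pbar (s - t) m₂ p :=
      fBS_mono_m hσ hu hp hm₁ h12
    -- part B
    have hB : m₁ * ((σ ^ 2 / 2) * stdNormalCdf (fBS σ Pbar (s - t) m₁ p))
        ≤ m₂ * ((σ ^ 2 / 2) * stdNormalCdf (fBS σ Pbar (s - t) m₂ p)) := by
      have hc1 := stdNormalCdf_nonneg (fBS σ Pbar (s - t) m₁ p)
      have hmono := stdNormalCdf_mono hf12
      have hc0 : (0:ℝ) ≤ σ ^ 2 / 2 := by positivity
      exact mul_le_mul h12 (mul_le_mul_of_nonneg_left hmono hc0)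
        (mul_nonneg hc0 hc1) hm₂.le
    -- part A
    have hA : m₁ * ((σ / Real.sqrt (s - t)) * stdNormalPdf (fBS σ Pbar (s - t) m₁ p))
        ≤ m₂ * ((σ / Real.sqrt (s - t)) * stdNormalPdf (fBS σ Pbar (s - t) m₂ p)) := by
      rcases eq_or_lt_of_le hu with h0 | hupos
      · rw [← h0]
        simp
      · set a := σ * Real.sqrt (s - t) with hadef
        have hsq : 0 < Real.sqrt (s - t) := Real.sqrt_pos.2 hupos
        have ha : 0 < a := mul_pos hσ hsq
        have hfe : ∀ m : ℝ, fBS σ Pbar (s - t) m p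
            = a/2 - Real.log ((Pbar - p)/m + 1)/a := by
          intro m
          unfold fBS
          rw [hadef]
          ring
        have hkey := key_ineq (K := Pbar - p) ha hK hm₁ h12
        rw [← hfe m₁, ← hfe m₂] at hkey
        have hpe : ∀ m : ℝ, m * ((σ / Real.sqrt (s - t)) * stdNormalPdf (fBS σ Pbar (s - t) m p))
            = (σ / Real.sqrt (s - t)) * (Real.sqrt (2 * Real.pi))⁻¹
              * (m * Real.exp (-(fBS σ Pbar (s - t) m p)^2/2)) := by
          intro m
          unfold stdNormalPdf
          rw [div_eq_mul_inv]
          ring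
        rw [hpe m₁, hpe m₂]
        apply mul_le_mul_of_nonneg_left _ (by positivity)
        convert hkey using 3 <;> ring
    calc m₁ * ((Gfun lam gam Gam (T - s) / Gfun lam gam Gam (T - t))
          * ((σ / Real.sqrt (s - t)) * stdNormalPdf (fBS σ Pbar (s - t) m₁ p)
              + (σ ^ 2 / 2) * stdNormalCdf (fBS σ Pbar (s - t) m₁ p)))
        = (Gfun lam gam Gam (T - s) / Gfun lam gam Gam (T - t))
          * (m₁ * ((σ / Real.sqrt (s - t)) * stdNormalPdf (fBS σ Pbar (s - t) m₁ p))
              + m₁ * ((σ ^ 2 / 2) * stdNormalCdf (fBS σ Pbar (s - t) m₁ p))) := by ring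
      _ ≤ (Gfun lam gam Gam (T - s) / Gfun lam gam Gam (T - t))
          * (m₂ * ((σ / Real.sqrt (s - t)) * stdNormalPdf (fBS σ Pbar (s - t) m₂ p))
              + m₂ * ((σ ^ 2 / 2) * stdNormalCdf (fBS σ Pbar (s - t) m₂ p))) :=
          mul_le_mul_of_nonneg_left (add_le_add hA hB) hratio0
      _ = m₂ * ((Gfun lam gam Gam (T - s) / Gfun lam gam Gam (T - t))
          * ((σ / Real.sqrt (s - t)) * stdNormalPdf (fBS σ Pbar (s - t) m₂ p)
              + (σ ^ 2 / 2) * stdNormalCdf (fBS σ Pbar (s - t) m₂ p))) := by ring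
  have hInt₁ := integrable_integrand (Pbar := Pbar) (m := m₁) (p := p) hlam hgam hGam hσ htT'
  have hInt₂ := integrable_integrand (Pbar := Pbar) (m := m₂) (p := p) hlam hgam hGam hσ htT'
  have hkey : (∫ s in t..T, m₁ * ((Gfun lam gam Gam (T - s) / Gfun lam gam Gam (T - t))
        * ((σ / Real.sqrt (s - t)) * stdNormalPdf (fBS σ Pbar (s - t) m₁ p)
            + (σ ^ 2 / 2) * stdNormalCdf (fBS σ Pbar (s - t) m₁ p))))
      ≤ ∫ s in t..T, m₂ * ((Gfun lam gam Gam (T - s) / Gfun lam gam Gam (T - t))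
        * ((σ / Real.sqrt (s - t)) * stdNormalPdf (fBS σ Pbar (s - t) m₂ p)
            + (σ ^ 2 / 2) * stdNormalCdf (fBS σ Pbar (s - t) m₂ p))) :=
    integral_mono_on htT' (hInt₁.const_mul m₁) (hInt₂.const_mul m₂) hpt
  rw [intervalIntegral.integral_const_mul, intervalIntegral.integral_const_mul] at hkey
  unfold uBS
  have e : ∀ m X : ℝ, m / (2 * lam) * X = (2 * lam)⁻¹ * (m * X) := by
    intro m X; ring
  rw [e, e]
  exact mul_le_mul_of_nonneg_left hkey (by positivity)

end
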